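/- Let e₁ = (1,0,0), e₂ = (0,1,0), e₃ = (0,0,1), and consider the degree-one (band-limited) susceptibilities Q(y) = y₁ and Q̄(y) = y₃ on S, with dipole directions d = e₃ and d̄ = e₁ respectively. Then V[Q,d](x) = V[Q̄,d̄](x) for every x ∈ ℝ³ with |x| ≠ 1; indeed the residual magnetization m_{Q,d}(y) − m_{Q̄,d̄}(y) = y₃ e₁ − y₁ e₃ = −(y × e₂) is silent. Hence band-limited susceptibilities with two non-parallel dipole directions d ≠ ±d̄ can be equivalent from outside. -/

import Mathlib

open MeasureTheory
open scoped RealInnerProductSpace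

noncomputable section

abbrev E3 := EuclideanSpace ℝ (Fin 3)

/-- The unit sphere `S = {x ∈ ℝ³ : |x| = 1}`. -/
def sphS : Set E3 := Metric.sphere 0 1

/-- The magnetic potential generated by a magnetization `m` on the unit sphere. -/
def V (m : E3 → E3) (x : E3) : ℝ :=
  (4 * Real.pi)⁻¹ * ∫ y in sphS, ⟪m y, (‖x - y‖ ^ 3)⁻¹ • (x - y)⟫ ∂μH[2]

/-- Dipole-induced magnetization with susceptibility `Q` and dipole direction `d`. -/
def mQd (Q : E3 → ℝ) (d : E3) (x : E3) : E3 := Q x • ((3 * ⟪x, d⟫) • x - d)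

/-- Cross product on `ℝ³`. -/
def cross3 (a b : E3) : E3 :=
  (EuclideanSpace.equiv (Fin 3) ℝ).symm
    ![a 1 * b 2 - a 2 * b 1, a 2 * b 0 - a 0 * b 2, a 0 * b 1 - a 1 * b 0]

/-! ### Auxiliary lemmas -/

lemma inner3 (a b : E3) : ⟪a, b⟫ = a 0 * b 0 + a 1 * b 1 + a 2 * b 2 := by
  simp [PiLp.inner_apply, RCLike.inner_apply, Fin.sum_univ_three, mul_comm]

lemma norm3_le (v : E3) : ‖v‖ ≤ |v 0| + |v 1| + |v 2| := by
  rw [EuclideanSpace.norm_eq, Fin.sum_univ_three]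
  have h : ‖v 0‖ ^ 2 + ‖v 1‖ ^ 2 + ‖v 2‖ ^ 2 ≤ (|v 0| + |v 1| + |v 2|) ^ 2 := by
    simp only [Real.norm_eq_abs]
    nlinarith [abs_nonneg (v 0), abs_nonneg (v 1), abs_nonneg (v 2)]
  calc Real.sqrt (‖v 0‖ ^ 2 + ‖v 1‖ ^ 2 + ‖v 2‖ ^ 2)
      ≤ Real.sqrt ((|v 0| + |v 1| + |v 2|) ^ 2) := Real.sqrt_le_sqrt h
    _ = |v 0| + |v 1| + |v 2| := Real.sqrt_sq (by positivity)

/-- Spherical coordinates parametrization of the unit sphere. -/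
def Phi : (Fin 2 → ℝ) → E3 := fun p =>
  (WithLp.equiv 2 (Fin 3 → ℝ)).symm
    ![Real.sin (p 0) * Real.cos (p 1), Real.sin (p 0) * Real.sin (p 1), Real.cos (p 0)]

lemma Phi_apply (p : Fin 2 → ℝ) :
    Phi p 0 = Real.sin (p 0) * Real.cos (p 1) ∧
    Phi p 1 = Real.sin (p 0) * Real.sin (p 1) ∧
    Phi p 2 = Real.cos (p 0) := by
  refine ⟨?_, ?_, ?_⟩ <;> simp [Phi, PiLp.toLp_apply]

lemma abs_sin_sub (s t : ℝ) : |Real.sin s - Real.sin t| ≤ |s - t| := by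
  rw [Real.sin_sub_sin, abs_mul, abs_mul]
  have h1 : |Real.sin ((s - t) / 2)| ≤ |(s - t) / 2| := Real.abs_sin_le_abs
  have h2 : |Real.cos ((s + t) / 2)| ≤ 1 := Real.abs_cos_le_one _
  have h3 : |(s - t) / 2| = |s - t| / 2 := by rw [abs_div]; norm_num
  calc |(2:ℝ)| * |Real.sin ((s - t) / 2)| * |Real.cos ((s + t) / 2)|
      ≤ |(2:ℝ)| * |(s - t) / 2| * 1 := by gcongr
    _ = |s - t| := by rw [h3, show |(2:ℝ)| = 2 from by norm_num]; ring

lemma abs_cos_sub (s t : ℝ) : |Real.cos s - Real.cos t| ≤ |s - t| := by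
  rw [Real.cos_sub_cos, abs_mul, abs_mul]
  have h1 : |Real.sin ((s - t) / 2)| ≤ |(s - t) / 2| := Real.abs_sin_le_abs
  have h2 : |Real.sin ((s + t) / 2)| ≤ 1 := Real.abs_sin_le_one _
  have h3 : |(s - t) / 2| = |s - t| / 2 := by rw [abs_div]; norm_num
  calc |(-2:ℝ)| * |Real.sin ((s + t) / 2)| * |Real.sin ((s - t) / 2)|
      ≤ |(-2:ℝ)| * 1 * |(s - t) / 2| := by gcongr
    _ = |s - t| := by rw [h3, show |(-2:ℝ)| = 2 from by norm_num]; ring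

lemma lipPhi : LipschitzWith 6 Phi := by
  refine LipschitzWith.of_dist_le_mul fun p q => ?_
  have hd0 : |p 0 - q 0| ≤ dist p q := by
    simpa [Real.dist_eq] using dist_le_pi_dist p q 0
  have hd1 : |p 1 - q 1| ≤ dist p q := by
    simpa [Real.dist_eq] using dist_le_pi_dist p q 1
  have key : ∀ a a' b b' : ℝ,
      |Real.sin a * Real.cos b - Real.sin a' * Real.cos b'| ≤ |a - a'| + |b - b'| := by
    intro a a' b b'
    have h1 : Real.sin a * Real.cos b - Real.sin a' * Real.cos b' =
        (Real.sin a - Real.sin a') * Real.cos b + Real.sin a' * (Real.cos b - Real.cos b') := by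
      ring
    rw [h1]
    refine (abs_add_le _ _).trans ?_
    rw [abs_mul, abs_mul]
    have := abs_sin_sub a a'
    have := abs_cos_sub b b'
    nlinarith [Real.abs_cos_le_one b, Real.abs_sin_le_one a', abs_nonneg (Real.sin a - Real.sin a'),
      abs_nonneg (Real.cos b - Real.cos b'), abs_nonneg (a - a'), abs_nonneg (b - b')]
  have key2 : ∀ a a' b b' : ℝ,
      |Real.sin a * Real.sin b - Real.sin a' * Real.sin b'| ≤ |a - a'| + |b - b'| := by
    intro a a' b b'
    have h1 : Real.sin a * Real.sin b - Real.sin a' * Real.sin b' =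
        (Real.sin a - Real.sin a') * Real.sin b + Real.sin a' * (Real.sin b - Real.sin b') := by
      ring
    rw [h1]
    refine (abs_add_le _ _).trans ?_
    rw [abs_mul, abs_mul]
    have := abs_sin_sub a a'
    have := abs_sin_sub b b'
    nlinarith [Real.abs_sin_le_one b, Real.abs_sin_le_one a', abs_nonneg (Real.sin a - Real.sin a'),
      abs_nonneg (Real.sin b - Real.sin b'), abs_nonneg (a - a'), abs_nonneg (b - b')]
  rw [dist_eq_norm]
  refine (norm3_le _).trans ?_
  have e0 : (Phi p - Phi q) 0 = Phi p 0 - Phi q 0 := rfl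
  have e1 : (Phi p - Phi q) 1 = Phi p 1 - Phi q 1 := rfl
  have e2 : (Phi p - Phi q) 2 = Phi p 2 - Phi q 2 := rfl
  rw [e0, e1, e2, (Phi_apply p).1, (Phi_apply p).2.1, (Phi_apply p).2.2,
    (Phi_apply q).1, (Phi_apply q).2.1, (Phi_apply q).2.2]
  have c0 := key (p 0) (q 0) (p 1) (q 1)
  have c1 := key2 (p 0) (q 0) (p 1) (q 1)
  have c2 := abs_cos_sub (p 0) (q 0)
  have h6 : ((6 : NNReal) : ℝ) = 6 := by norm_num
  rw [h6]
  have hd := dist_nonneg (x := p) (y := q)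
  linarith

lemma sphS_subset : sphS ⊆ Phi '' (Set.Icc (fun _ => (-4:ℝ)) (fun _ => 4)) := by
  intro v hv
  have hnorm : ‖v‖ = 1 := by simpa [sphS] using hv
  have hsum : v 0 ^ 2 + v 1 ^ 2 + v 2 ^ 2 = 1 := by
    have h := congrArg (fun r : ℝ => r ^ 2) hnorm
    rw [EuclideanSpace.norm_eq, Fin.sum_univ_three] at h
    simp only [Real.norm_eq_abs, sq_abs, one_pow] at h
    rwa [Real.sq_sqrt (by positivity)] at h
  have hcm : -1 ≤ v 2 := by nlinarith
  have hcM : v 2 ≤ 1 := by nlinarith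
  set θ := Real.arccos (v 2) with hθ
  have hθ0 : 0 ≤ θ := Real.arccos_nonneg _
  have hθπ : θ ≤ Real.pi := Real.arccos_le_pi _
  have hπ4 : Real.pi ≤ 4 := Real.pi_le_four
  have hcos : Real.cos θ = v 2 := Real.cos_arccos hcm hcM
  set r := Real.sqrt (v 0 ^ 2 + v 1 ^ 2) with hr
  have hsin : Real.sin θ = r := by
    rw [hθ, Real.sin_arccos, hr]
    congr 1
    nlinarith
  by_cases h0 : v 0 = 0 ∧ v 1 = 0
  · have hr0 : r = 0 := by rw [hr, h0.1, h0.2]; simp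
    refine ⟨![θ, 0], ?_, ?_⟩
    · rw [Set.mem_Icc]
      constructor <;> intro i <;> fin_cases i <;>
        simp_all <;> linarith
    · ext i
      fin_cases i
      · show Phi ![θ, 0] 0 = v 0
        rw [(Phi_apply _).1]; simp [hsin, hr0, h0.1]
      · show Phi ![θ, 0] 1 = v 1
        rw [(Phi_apply _).2.1]; simp [hsin, hr0, h0.2]
      · show Phi ![θ, 0] 2 = v 2
        rw [(Phi_apply _).2.2]; simp [hcos]
  · have hrpos : 0 < r := by
      rw [hr]
      apply Real.sqrt_pos.mpr
      rcases not_and_or.mp h0 with h | h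
      · have := mul_self_pos.mpr h
        nlinarith [sq_nonneg (v 1)]
      · have := mul_self_pos.mpr h
        nlinarith [sq_nonneg (v 0)]
    set z : ℂ := ⟨v 0, v 1⟩ with hzdef
    have hz : z ≠ 0 := by
      intro h
      rw [Complex.ext_iff] at h
      exact h0 ⟨h.1, h.2⟩
    have habs : ‖z‖ = r := by
      rw [Complex.norm_def, hr]
      congr 1
      show v 0 * v 0 + v 1 * v 1 = _
      ring
    set φ := Complex.arg z with hφ
    have hφcos : Real.cos φ = v 0 / r := by rw [hφ, Complex.cos_arg hz, habs]
    have hφsin : Real.sin φ = v 1 / r := by rw [hφ, Complex.sin_arg, habs]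
    have hφ1 : -Real.pi < φ := Complex.neg_pi_lt_arg z
    have hφ2 : φ ≤ Real.pi := Complex.arg_le_pi z
    refine ⟨![θ, φ], ?_, ?_⟩
    · rw [Set.mem_Icc]
      constructor <;> intro i <;> fin_cases i <;>
        simp_all <;> linarith
    · ext i
      fin_cases i
      · show Phi ![θ, φ] 0 = v 0
        rw [(Phi_apply _).1]
        show Real.sin θ * Real.cos φ = v 0
        rw [hsin, hφcos]; field_simp
      · show Phi ![θ, φ] 1 = v 1
        rw [(Phi_apply _).2.1]
        show Real.sin θ * Real.sin φ = v 1
        rw [hsin, hφsin]; field_simp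
      · show Phi ![θ, φ] 2 = v 2
        rw [(Phi_apply _).2.2]
        show Real.cos θ = v 2
        exact hcos

lemma sphS_ne_top : μH[(2:ℝ)] sphS ≠ ⊤ := by
  have hle : μH[(2:ℝ)] sphS ≤ μH[(2:ℝ)] (Phi '' (Set.Icc (fun _ => (-4:ℝ)) (fun _ => 4))) :=
    measure_mono sphS_subset
  have him := lipPhi.hausdorffMeasure_image_le (by norm_num : (0:ℝ) ≤ 2)
    (Set.Icc (fun _ => (-4:ℝ)) (fun _ => 4))
  have hpi : (μH[(2:ℝ)] : Measure (Fin 2 → ℝ)) = volume := by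
    have h := hausdorffMeasure_pi_real (ι := Fin 2)
    simpa using h
  have hbox : (μH[(2:ℝ)] : Measure (Fin 2 → ℝ)) (Set.Icc (fun _ => (-4:ℝ)) (fun _ => 4)) ≠ ⊤ := by
    rw [hpi]
    exact (isCompact_Icc.measure_lt_top).ne
  refine ne_top_of_le_ne_top ?_ (hle.trans him)
  refine ENNReal.mul_ne_top ?_ hbox
  simp only [ne_eq, ENNReal.rpow_ofNat]
  exact ENNReal.pow_ne_top ENNReal.coe_ne_top

lemma sphS_measurable : MeasurableSet sphS := (Metric.isClosed_sphere).measurableSet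

lemma integral_silent (x c : E3) (hc : ⟪c, x⟫ = 0) :
    ∫ y in sphS, (‖x - y‖ ^ 3)⁻¹ * ⟪c, y⟫ ∂μH[2] = 0 := by
  set K : Submodule ℝ E3 := (ℝ ∙ c)ᗮ with hK
  set R := K.reflection with hRdef
  have hRx : R x = x :=
    Submodule.reflection_mem_subspace_eq_self
      (Submodule.mem_orthogonal_singleton_iff_inner_right.mpr hc)
  have hRc : R c = -c :=
    Submodule.reflection_mem_subspace_orthogonalComplement_eq_neg
      ((ℝ ∙ c).le_orthogonal_orthogonal (Submodule.mem_span_singleton_self c))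
  have hmp : MeasurePreserving R (μH[(2:ℝ)]) (μH[(2:ℝ)]) :=
    R.toIsometryEquiv.measurePreserving_hausdorffMeasure _
  have hpre : (R : E3 → E3) ⁻¹' sphS = sphS := by
    ext y
    simp [sphS, mem_sphere_iff_norm]
  have hmpr : MeasurePreserving R (μH[(2:ℝ)].restrict sphS) (μH[(2:ℝ)].restrict sphS) := by
    have := hmp.restrict_preimage (s := sphS) sphS_measurable
    rwa [hpre] at this
  have hemb : MeasurableEmbedding (R : E3 → E3) :=
    R.toHomeomorph.measurableEmbedding
  set f : E3 → ℝ := fun y => (‖x - y‖ ^ 3)⁻¹ * ⟪c, y⟫ with hf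
  have key : ∀ y, f (R y) = - f y := by
    intro y
    have h1 : ‖x - R y‖ = ‖x - y‖ := by
      conv_lhs => rw [← hRx]
      rw [← map_sub, R.norm_map]
    have h2 : ⟪c, R y⟫ = -⟪c, y⟫ := by
      calc ⟪c, R y⟫ = ⟪R (R c), R y⟫ := by rw [Submodule.reflection_reflection]
        _ = ⟪R c, y⟫ := R.inner_map_map _ _
        _ = -⟪c, y⟫ := by rw [hRc, inner_neg_left]
    show (‖x - R y‖ ^ 3)⁻¹ * ⟪c, R y⟫ = -((‖x - y‖ ^ 3)⁻¹ * ⟪c, y⟫)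
    rw [h1, h2]
    ring
  have hcomp : ∫ y in sphS, f y ∂μH[2] = ∫ y in sphS, f (R y) ∂μH[2] :=
    (hmpr.integral_comp hemb f).symm
  have : ∫ y in sphS, f y ∂μH[2] = - ∫ y in sphS, f y ∂μH[2] := by
    calc ∫ y in sphS, f y ∂μH[2] = ∫ y in sphS, f (R y) ∂μH[2] := hcomp
      _ = ∫ y in sphS, -(f y) ∂μH[2] := by
            refine integral_congr_ae (Filter.Eventually.of_forall fun y => key y)
      _ = - ∫ y in sphS, f y ∂μH[2] := integral_neg f
  linarith

/-- **A band-limited example of non-uniqueness of the dipole direction.** The degree-one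
susceptibilities `Q(y) = y₁` with direction `e₃` and `Q̄(y) = y₃` with direction `e₁`
produce the same potential off the unit sphere: their residual magnetization is
`y₃e₁ − y₁e₃ = −(y × e₂)`, which is silent. -/
theorem bandlimited_nonuniqueness_example
    (e₁ e₂ e₃ : E3)
    (he₁ : e₁ = EuclideanSpace.single 0 1) (he₂ : e₂ = EuclideanSpace.single 1 1)
    (he₃ : e₃ = EuclideanSpace.single 2 1)
    (Q Qbar : E3 → ℝ) (hQ : ∀ y : E3, Q y = y 0) (hQbar : ∀ y : E3, Qbar y = y 2) :
    (∀ y : E3, mQd Q e₃ y - mQd Qbar e₁ y = y 2 • e₁ - y 0 • e₃) ∧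
    (∀ y : E3, y 2 • e₁ - y 0 • e₃ = -(cross3 y e₂)) ∧
    (∀ x : E3, ‖x‖ ≠ 1 → V (mQd Q e₃) x = V (mQd Qbar e₁) x) := by
  subst he₁ he₂ he₃
  have hsingle : ∀ (i : Fin 3) (y : E3), ⟪y, EuclideanSpace.single i (1:ℝ)⟫ = y i := by
    intro i y
    rw [inner3]
    fin_cases i <;> simp [EuclideanSpace.single_apply]
  have h1 : ∀ y : E3, mQd Q (EuclideanSpace.single 2 1) y -
      mQd Qbar (EuclideanSpace.single 0 1) y =
      y 2 • EuclideanSpace.single 0 1 - y 0 • EuclideanSpace.single 2 1 := by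
    intro y
    rw [mQd, mQd, hQ, hQbar, hsingle, hsingle]
    ext i
    fin_cases i <;>
      simp [EuclideanSpace.single_apply] <;> ring
  refine ⟨h1, ?_, ?_⟩
  · intro y
    ext i
    fin_cases i <;>
      simp [cross3, EuclideanSpace.single_apply, PiLp.toLp_apply]
  · intro x hx
    rw [V, V]
    congr 1
    set c : E3 := x 0 • EuclideanSpace.single 2 (1:ℝ) - x 2 • EuclideanSpace.single 0 1 with hcdef
    have hc : ⟪c, x⟫ = 0 := by
      rw [inner3]
      simp [hcdef, EuclideanSpace.single_apply]
      ring
    set G : E3 → ℝ := fun y => (‖x - y‖ ^ 3)⁻¹ * ⟪c, y⟫ with hG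
    set F₁ : E3 → ℝ := fun y => ⟪mQd Q (EuclideanSpace.single 2 1) y,
      (‖x - y‖ ^ 3)⁻¹ • (x - y)⟫ with hF₁
    set F₂ : E3 → ℝ := fun y => ⟪mQd Qbar (EuclideanSpace.single 0 1) y,
      (‖x - y‖ ^ 3)⁻¹ • (x - y)⟫ with hF₂
    have hdiff : ∀ y : E3, F₁ y - F₂ y = G y := by
      intro y
      rw [hF₁, hF₂, hG]
      show ⟪_, _⟫ - ⟪_, _⟫ = _
      rw [← inner_sub_left, h1 y, real_inner_smul_right]
      congr 1
      rw [inner3, inner3]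
      simp [hcdef, EuclideanSpace.single_apply]
      ring
    have hGmeas : Measurable G := by
      have hc1 : Continuous fun y : E3 => ‖x - y‖ ^ 3 :=
        ((continuous_const.sub continuous_id).norm.pow 3)
      have hc2 : Continuous fun y : E3 => ⟪c, y⟫ :=
        continuous_const.inner continuous_id
      exact (hc1.measurable.inv).mul hc2.measurable
    have hGint : IntegrableOn G sphS μH[2] := by
      refine Measure.integrableOn_of_bounded sphS_ne_top hGmeas.aestronglyMeasurable
        (M := (|‖x‖ - 1| ^ 3)⁻¹ * ‖c‖) ?_
      refine ae_restrict_of_forall_mem sphS_measurable fun y hy => ?_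
      have hny : ‖y‖ = 1 := by simpa [sphS] using hy
      have hδ : 0 < |‖x‖ - 1| := abs_pos.mpr (sub_ne_zero.mpr hx)
      have hxy : |‖x‖ - 1| ≤ ‖x - y‖ := by
        have := abs_norm_sub_norm_le x y
        rwa [hny] at this
      have hxyp : (0:ℝ) < ‖x - y‖ := lt_of_lt_of_le hδ hxy
      have hinner : |⟪c, y⟫| ≤ ‖c‖ := by
        have := abs_real_inner_le_norm c y
        rwa [hny, mul_one] at this
      calc ‖G y‖ = (‖x - y‖ ^ 3)⁻¹ * |⟪c, y⟫| := by
            rw [hG]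
            show ‖(‖x - y‖ ^ 3)⁻¹ * ⟪c, y⟫‖ = _
            rw [Real.norm_eq_abs, abs_mul, abs_inv, abs_of_nonneg (by positivity)]
        _ ≤ (|‖x‖ - 1| ^ 3)⁻¹ * ‖c‖ := by
            gcongr
    have hG0 : ∫ y in sphS, G y ∂μH[2] = 0 := integral_silent x c hc
    by_cases hI : IntegrableOn F₁ sphS μH[2]
    · calc ∫ y in sphS, F₁ y ∂μH[2]
          = ∫ y in sphS, F₁ y ∂μH[2] - ∫ y in sphS, G y ∂μH[2] := by rw [hG0]; ring
        _ = ∫ y in sphS, (F₁ y - G y) ∂μH[2] := (integral_sub hI hGint).symm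
        _ = ∫ y in sphS, F₂ y ∂μH[2] := by
            refine integral_congr_ae (Filter.Eventually.of_forall fun y => ?_)
            show F₁ y - G y = F₂ y
            have := hdiff y
            linarith
    · have hI2 : ¬ IntegrableOn F₂ sphS μH[2] := by
        intro h
        apply hI
        have heq : F₁ = fun y => F₂ y + G y := funext fun y => by
          have := hdiff y; linarith
        rw [heq]
        exact h.add hGint
      rw [integral_undef hI, integral_undef hI2]
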